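/- Pointwise version of the Bregman identity with priors: for a differentiable convex f : ℝ^{k-1} → ℝ, prior π with all π_i > 0, and positive density-ratio vectors r, r̂ ∈ ℝ_{>0}^{k-1}, define η = Ψ_dr^{-1}(r) and η̂ = Ψ_dr^{-1}(r̂) (with r_k = r̂_k = 1). Then B_f(η_{[1:k-1]}, η̂_{[1:k-1]}) = (π_k / (π_k + Σ_{i∈[k-1]} π_i r_i)) · B_{f*_π}(r, r̂), where f*_π(r) := (1 + Σ_i π_i r_i/π_k) · f(π_{[1:k-1]}∘r / (π_k + Σ_i π_i r_i)). -/

import Mathlib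

open ContinuousLinearMap

theorem stmt_9 (n : ℕ) (f : (Fin n → ℝ) → ℝ)
    (hconv : ConvexOn ℝ Set.univ f) (hdiff : Differentiable ℝ f)
    (π : Fin (n+1) → ℝ) (hπ : ∀ i, 0 < π i)
    (r rhat : Fin n → ℝ) (hr : ∀ i, 0 < r i) (hrhat : ∀ i, 0 < rhat i)
    (η ηhat : Fin n → ℝ)
    (hη : ∀ i, η i = π i.castSucc * r i /
      (π (Fin.last n) + ∑ j, π j.castSucc * r j))
    (hηhat : ∀ i, ηhat i = π i.castSucc * rhat i /
      (π (Fin.last n) + ∑ j, π j.castSucc * rhat j))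
    (fπ : (Fin n → ℝ) → ℝ)
    (hfπ : ∀ s, fπ s = (1 + ∑ i, π i.castSucc * s i / π (Fin.last n)) *
      f (fun i => π i.castSucc * s i / (π (Fin.last n) + ∑ j, π j.castSucc * s j)))
    (B : ((Fin n → ℝ) → ℝ) → (Fin n → ℝ) → (Fin n → ℝ) → ℝ)
    (hB : ∀ φ x y, B φ x y = φ x - φ y - fderiv ℝ φ y (x - y)) :
    B f η ηhat
      = (π (Fin.last n) / (π (Fin.last n) + ∑ i, π i.castSucc * r i))
          * B fπ r rhat := by
  classical
  have hc0 : 0 < π (Fin.last n) := hπ _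
  set c : ℝ := π (Fin.last n) with hcdef
  have hcne : c ≠ 0 := ne_of_gt hc0
  set T : (Fin n → ℝ) → ℝ := fun s => c + ∑ j, π j.castSucc * s j with hTdef
  have hTpos : ∀ s : Fin n → ℝ, (∀ i, 0 < s i) → 0 < T s := by
    intro s hs
    exact add_pos_of_pos_of_nonneg hc0 (Finset.sum_nonneg fun j _ =>
      le_of_lt (mul_pos (hπ _) (hs j)))
  have hA0 : T r ≠ 0 := ne_of_gt (hTpos r hr)
  have hB0 : T rhat ≠ 0 := ne_of_gt (hTpos rhat hrhat)
  -- the linear functional v ↦ ∑ π_i v_i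
  set L0 : (Fin n → ℝ) →L[ℝ] ℝ := ∑ i, π i.castSucc • ContinuousLinearMap.proj i with hL0def
  have hL0app : ∀ v : Fin n → ℝ, L0 v = ∑ i, π i.castSucc * v i := by
    intro v
    simp [hL0def, ContinuousLinearMap.sum_apply]
  have hTder : ∀ x, HasFDerivAt T L0 x := by
    intro x
    have h : HasFDerivAt (fun s : Fin n → ℝ => ∑ j, π j.castSucc * s j) L0 x := by
      rw [hL0def]
      exact HasFDerivAt.fun_sum fun i _ => (hasFDerivAt_apply i x).const_mul (π i.castSucc)
    simpa [hTdef] using h.const_add c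
  -- the map g and its derivative at rhat
  set g : (Fin n → ℝ) → (Fin n → ℝ) := fun s i => π i.castSucc * s i / T s with hgdef
  set Dg : (Fin n → ℝ) →L[ℝ] (Fin n → ℝ) := ContinuousLinearMap.pi (fun i =>
      (π i.castSucc * rhat i) • ((-((T rhat) ^ 2)⁻¹) • L0)
        + (T rhat)⁻¹ • (π i.castSucc • ContinuousLinearMap.proj i)) with hDgdef
  have hinv : HasFDerivAt (fun s : Fin n → ℝ => (T s)⁻¹)
      ((-((T rhat) ^ 2)⁻¹) • L0) rhat :=
    (hasDerivAt_inv hB0).comp_hasFDerivAt rhat (hTder rhat)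
  have hgder : HasFDerivAt g Dg rhat := by
    rw [hgdef, hDgdef]
    apply hasFDerivAt_pi.mpr
    intro i
    have h1 : HasFDerivAt (fun s : Fin n → ℝ => π i.castSucc * s i)
        (π i.castSucc • (ContinuousLinearMap.proj i : (Fin n → ℝ) →L[ℝ] ℝ)) rhat := by
      exact (hasFDerivAt_apply (𝕜 := ℝ) i rhat).const_mul (π i.castSucc)
    have := h1.fun_mul hinv
    simpa [div_eq_mul_inv] using this
  have hgr : g r = η := by
    funext i
    rw [hgdef, hη i, hTdef]
  have hgrhat : g rhat = ηhat := by
    funext i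
    rw [hgdef, hηhat i, hTdef]
  set Df : (Fin n → ℝ) →L[ℝ] ℝ := fderiv ℝ f ηhat with hDfdef
  have hfd : HasFDerivAt f Df (g rhat) := by
    rw [hgrhat]; exact (hdiff ηhat).hasFDerivAt
  have hcomp : HasFDerivAt (fun s => f (g s)) (Df.comp Dg) rhat := hfd.comp rhat hgder
  have ha : HasFDerivAt (fun s => T s / c) (c⁻¹ • L0) rhat := by
    have := (hTder rhat).const_mul c⁻¹
    simpa [div_eq_inv_mul] using this
  have hfπeq : fπ = fun s => (T s / c) * f (g s) := by
    funext s
    rw [hfπ s]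
    congr 1
    · rw [hTdef]
      simp only []
      rw [← Finset.sum_div, add_div, div_self hcne]
  set L : (Fin n → ℝ) →L[ℝ] ℝ :=
      (T rhat / c) • (Df.comp Dg) + f (g rhat) • (c⁻¹ • L0) with hLdef
  have hfπder : HasFDerivAt fπ L rhat := by
    rw [hfπeq, hLdef]
    exact ha.mul hcomp
  have hL0sub : L0 (r - rhat) = T r - T rhat := by
    rw [hL0app, hTdef]
    simp [mul_sub, Finset.sum_sub_distrib]
  have hkey : Dg (r - rhat) = (T r / T rhat) • (η - ηhat) := by
    funext i
    rw [hDgdef]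
    simp only [ContinuousLinearMap.pi_apply, ContinuousLinearMap.add_apply,
      ContinuousLinearMap.smul_apply, ContinuousLinearMap.proj_apply,
      Pi.smul_apply, Pi.sub_apply, smul_eq_mul, hL0sub, hη i, hηhat i]
    rw [hTdef]
    simp only []
    have hA0' : c + ∑ j, π j.castSucc * r j ≠ 0 := hA0
    have hB0' : c + ∑ j, π j.castSucc * rhat j ≠ 0 := hB0
    field_simp
    ring
  have hDapp : Df (Dg (r - rhat)) = (T r / T rhat) * Df (η - ηhat) := by
    rw [hkey, map_smul, smul_eq_mul]
  have hfderivfπ : fderiv ℝ fπ rhat = L := hfπder.fderiv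
  have hLapp : L (r - rhat) = (T rhat / c) * ((T r / T rhat) * Df (η - ηhat))
      + f ηhat * (c⁻¹ * (T r - T rhat)) := by
    rw [hLdef]
    simp only [ContinuousLinearMap.add_apply, ContinuousLinearMap.smul_apply,
      ContinuousLinearMap.comp_apply, hL0sub, hgrhat, smul_eq_mul]
    rw [hDapp]
  have hfπr : fπ r = (T r / c) * f η := by
    rw [hfπeq]; simp only []; rw [hgr]
  have hfπrhat : fπ rhat = (T rhat / c) * f ηhat := by
    rw [hfπeq]; simp only []; rw [hgrhat]
  have hgoalA : c + ∑ i, π i.castSucc * r i = T r := by rw [hTdef]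
  rw [hB, hB, hfderivfπ, hLapp, hfπr, hfπrhat, hgoalA, ← hDfdef]
  field_simp
  ring
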